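/- The number of ordered partitions of [n] of a fixed type {A_1,...,A_k} (a set partition of [n] into k blocks) all of whose left-to-right minima occur at odd locations equals p_k, the number of permutations of [k] all of whose left-to-right minima occur at odd positions. In particular this number depends only on k, not on the blocks themselves. -/

import Mathlib

def prefixUnion (n : ℕ) (L : List (Finset (Fin n))) (i : ℕ) : Finset (Fin n) :=
  (L.take (i + 1)).foldr (· ∪ ·) ∅

def IsOP (n : ℕ) (L : List (Finset (Fin n))) : Prop :=
  (∀ A ∈ L, A.Nonempty) ∧ L.Pairwise Disjoint ∧ L.foldr (· ∪ ·) ∅ = Finset.univ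

def OddMinima (n : ℕ) (L : List (Finset (Fin n))) : Prop :=
  ∀ i, i < L.length → ∀ m : Fin n,
    (m ∈ prefixUnion n L i ∧ ∀ x ∈ prefixUnion n L i, m ≤ x) →
    ∃ j, ∃ hj : j < L.length, Even j ∧ m ∈ L.get ⟨j, hj⟩

def lrmOddPerm (n : ℕ) (a : Equiv.Perm (Fin n)) : Prop :=
  ∀ i : Fin n, (∀ j : Fin n, j ≤ i → a i ≤ a j) → Odd (i.val + 1)

/-- `permCount k` is the number of permutations of `[k]` with all
left-to-right minima at odd positions. -/
noncomputable def permCount (n : ℕ) : ℕ :=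
  Nat.card {a : Equiv.Perm (Fin n) // lrmOddPerm n a}

/-- `π` is a set partition of `[n]`. -/
def IsSetPartition (n : ℕ) (π : Finset (Finset (Fin n))) : Prop :=
  (∀ A ∈ π, A.Nonempty) ∧ (∀ A ∈ π, ∀ B ∈ π, A ≠ B → Disjoint A B) ∧
    π.sup id = Finset.univ

namespace CardOPAux

open Finset

variable {n : ℕ}

/-- The minimum value of a block, as a natural number. -/
noncomputable def μ (A : Finset (Fin n)) : ℕ :=
  if h : A.Nonempty then (A.min' h : ℕ) else 0

lemma μ_eq_min' (A : Finset (Fin n)) (h : A.Nonempty) : μ A = (A.min' h : ℕ) := by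
  rw [μ, dif_pos h]

lemma μ_le {A : Finset (Fin n)} {x : Fin n} (hx : x ∈ A) : μ A ≤ (x : ℕ) := by
  rw [μ_eq_min' A ⟨x, hx⟩]
  exact A.min'_le x hx

lemma injOn (π : Finset (Finset (Fin n))) (hπ : IsSetPartition n π) :
    Set.InjOn μ (π : Set (Finset (Fin n))) := by
  intro A hA B hB hAB
  by_contra hne
  have hd := hπ.2.1 A hA B hB hne
  have hAne := hπ.1 A hA
  have hBne := hπ.1 B hB
  have h1 : (A.min' hAne : ℕ) = (B.min' hBne : ℕ) := by
    rw [← μ_eq_min', ← μ_eq_min', hAB]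
  have h2 : A.min' hAne = B.min' hBne := Fin.ext h1
  exact (Finset.disjoint_left.mp hd (A.min'_mem hAne)) (h2 ▸ B.min'_mem hBne)

lemma mem_foldr {L : List (Finset (Fin n))} {m : Fin n} :
    m ∈ L.foldr (· ∪ ·) ∅ ↔ ∃ A ∈ L, m ∈ A := by
  induction L with
  | nil => simp
  | cons a l ih => simp [ih]

lemma mem_prefixUnion {L : List (Finset (Fin n))} {i : ℕ} {m : Fin n} :
    m ∈ prefixUnion n L i ↔ ∃ j, ∃ h : j < L.length, j ≤ i ∧ m ∈ L.get ⟨j, h⟩ := by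
  rw [prefixUnion, mem_foldr]
  constructor
  · rintro ⟨A, hA, hm⟩
    rw [List.mem_take_iff_getElem] at hA
    obtain ⟨j, hj, rfl⟩ := hA
    have hj1 : j < i + 1 := lt_of_lt_of_le hj inf_le_left
    have hj2 : j < L.length := lt_of_lt_of_le hj inf_le_right
    exact ⟨j, hj2, Nat.lt_succ_iff.mp hj1, hm⟩
  · rintro ⟨j, hj, hji, hm⟩
    refine ⟨L.get ⟨j, hj⟩, ?_, hm⟩
    rw [List.mem_take_iff_getElem]
    exact ⟨j, lt_inf_iff.mpr ⟨Nat.lt_succ_of_le hji, hj⟩, rfl⟩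

variable (π : Finset (Finset (Fin n))) (hπ : IsSetPartition n π)

noncomputable def e : Fin π.card ≃o {x // x ∈ π.image μ} :=
  (π.image μ).orderIsoOfFin (Finset.card_image_of_injOn (injOn π hπ))

noncomputable def B (i : Fin π.card) : Finset (Fin n) :=
  (Finset.mem_image.mp (e π hπ i).2).choose

lemma B_mem (i : Fin π.card) : B π hπ i ∈ π :=
  (Finset.mem_image.mp (e π hπ i).2).choose_spec.1

lemma μ_B (i : Fin π.card) : μ (B π hπ i) = ((e π hπ i : ℕ)) :=
  (Finset.mem_image.mp (e π hπ i).2).choose_spec.2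

noncomputable def ι (A : Finset (Fin n)) (hA : A ∈ π) : Fin π.card :=
  (e π hπ).symm ⟨μ A, Finset.mem_image_of_mem _ hA⟩

lemma B_ι (A : Finset (Fin n)) (hA : A ∈ π) : B π hπ (ι π hπ A hA) = A := by
  apply injOn π hπ (B_mem π hπ _) hA
  rw [μ_B]
  show ((e π hπ) ((e π hπ).symm ⟨μ A, _⟩) : ℕ) = μ A
  rw [OrderIso.apply_symm_apply]

lemma ι_B (i : Fin π.card) : ι π hπ (B π hπ i) (B_mem π hπ i) = i := by
  unfold ι
  have : (⟨μ (B π hπ i), Finset.mem_image_of_mem _ (B_mem π hπ i)⟩ :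
      {x // x ∈ π.image μ}) = e π hπ i := Subtype.ext (μ_B π hπ i)
  rw [this, OrderIso.symm_apply_apply]

lemma μ_B_le_iff (i j : Fin π.card) : μ (B π hπ i) ≤ μ (B π hπ j) ↔ i ≤ j := by
  rw [μ_B, μ_B]
  exact_mod_cast (e π hπ).le_iff_le

lemma B_inj : Function.Injective (B π hπ) := by
  intro i j h
  have := injOn π hπ
  have h2 : μ (B π hπ i) = μ (B π hπ j) := by rw [h]
  rw [μ_B, μ_B] at h2
  exact (e π hπ).injective (Subtype.ext h2)

/-- The list of blocks determined by a permutation. -/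
noncomputable def toList (a : Equiv.Perm (Fin π.card)) : List (Finset (Fin n)) :=
  List.ofFn (fun i => B π hπ (a i))

lemma toList_length (a : Equiv.Perm (Fin π.card)) : (toList π hπ a).length = π.card :=
  List.length_ofFn

lemma toList_get (a : Equiv.Perm (Fin π.card)) (j : ℕ) (hj : j < (toList π hπ a).length) :
    (toList π hπ a).get ⟨j, hj⟩ = B π hπ (a ⟨j, (toList_length π hπ a) ▸ hj⟩) := by
  simp only [toList]
  rw [List.get_ofFn]
  rfl

lemma toList_toFinset (a : Equiv.Perm (Fin π.card)) : (toList π hπ a).toFinset = π := by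
  ext A
  rw [List.mem_toFinset, toList, List.mem_ofFn]
  constructor
  · rintro ⟨i, rfl⟩; exact B_mem π hπ _
  · intro hA
    exact ⟨a.symm (ι π hπ A hA), by
      simp only [Equiv.apply_symm_apply]; exact B_ι π hπ A hA⟩

lemma toList_isOP (a : Equiv.Perm (Fin π.card)) : IsOP n (toList π hπ a) := by
  refine ⟨?_, ?_, ?_⟩
  · intro A hA
    rw [toList] at hA
    rw [List.mem_ofFn] at hA
    obtain ⟨i, rfl⟩ := hA
    exact hπ.1 _ (B_mem π hπ _)
  · rw [List.pairwise_iff_get]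
    intro i j hij
    rw [toList_get, toList_get]
    apply hπ.2.1 _ (B_mem π hπ _) _ (B_mem π hπ _)
    intro h
    have h2 := a.injective (B_inj π hπ h)
    simp only [Fin.mk.injEq] at h2
    have h4 : (i : ℕ) < (j : ℕ) := hij
    omega
  · apply Finset.eq_univ_of_forall
    intro x
    rw [mem_foldr]
    have hx : x ∈ π.sup id := hπ.2.2 ▸ Finset.mem_univ x
    rw [Finset.mem_sup] at hx
    obtain ⟨A, hA, hxA⟩ := hx
    refine ⟨A, ?_, hxA⟩
    rw [toList]
    rw [List.mem_ofFn]
    exact ⟨a.symm (ι π hπ A hA), by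
      simp only [Equiv.apply_symm_apply]; exact B_ι π hπ A hA⟩

/-- An element of the `j`-th block of `toList` lying in a block at position `j'`
must have `j = j'`. -/
lemma block_unique (a : Equiv.Perm (Fin π.card)) {m : Fin n} {i j : Fin π.card}
    (hi : m ∈ B π hπ (a i)) (hj : m ∈ B π hπ (a j)) : i = j := by
  by_contra hne
  have hBne : B π hπ (a i) ≠ B π hπ (a j) := fun h => hne (a.injective (B_inj π hπ h))
  exact Finset.disjoint_left.mp
    (hπ.2.1 _ (B_mem π hπ _) _ (B_mem π hπ _) hBne) hi hj

lemma key (a : Equiv.Perm (Fin π.card)) :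
    OddMinima n (toList π hπ a) ↔ lrmOddPerm π.card a := by
  constructor
  · intro hOM i hi
    set Ai := B π hπ (a i) with hAi
    have hAimem := B_mem π hπ (a i)
    have hAine : Ai.Nonempty := hπ.1 _ hAimem
    set m := Ai.min' hAine with hm
    have hilen : (i : ℕ) < (toList π hπ a).length := by
      rw [toList_length]; exact i.2
    have hmemPU : m ∈ prefixUnion n (toList π hπ a) (i : ℕ) := by
      rw [mem_prefixUnion]
      exact ⟨(i : ℕ), hilen, le_refl _, by rw [toList_get]; exact (Ai.min'_mem hAine)⟩
    have hminPU : ∀ x ∈ prefixUnion n (toList π hπ a) (i : ℕ), m ≤ x := by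
      intro x hx
      rw [mem_prefixUnion] at hx
      obtain ⟨j', hj', hj'i, hxmem⟩ := hx
      rw [toList_get] at hxmem
      set j'' : Fin π.card := ⟨j', (toList_length π hπ a) ▸ hj'⟩ with hj''
      have hle : a i ≤ a j'' := hi j'' (by
        rw [Fin.le_def]; exact hj'i)
      have h1 : μ Ai ≤ μ (B π hπ (a j'')) := (μ_B_le_iff π hπ _ _).mpr hle
      have h2 : μ (B π hπ (a j'')) ≤ (x : ℕ) := μ_le hxmem
      rw [Fin.le_def, ← μ_eq_min' Ai hAine]
      omega
    obtain ⟨j, hj, hje, hmem⟩ := hOM (i : ℕ) hilen m ⟨hmemPU, hminPU⟩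
    rw [toList_get] at hmem
    have heq : (⟨j, (toList_length π hπ a) ▸ hj⟩ : Fin π.card) = i :=
      block_unique π hπ a hmem (Ai.min'_mem hAine)
    have hji : j = (i : ℕ) := congrArg Fin.val heq
    rw [hji] at hje
    rw [← Nat.not_even_iff_odd, Nat.even_add_one, not_not]
    exact hje
  · intro hlrm i hi m ⟨hmem, hmin⟩
    rw [mem_prefixUnion] at hmem
    obtain ⟨j0, hj0, hj0i, hm0⟩ := hmem
    rw [toList_get] at hm0
    set j0' : Fin π.card := ⟨j0, (toList_length π hπ a) ▸ hj0⟩ with hj0'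
    have hkey : ∀ j : Fin π.card, j ≤ j0' → a j0' ≤ a j := by
      intro j hj
      have hjlen : (j : ℕ) < (toList π hπ a).length := by
        rw [toList_length]; exact j.2
      have hjne : (B π hπ (a j)).Nonempty := hπ.1 _ (B_mem π hπ _)
      have hminmem : (B π hπ (a j)).min' hjne ∈ prefixUnion n (toList π hπ a) i := by
        rw [mem_prefixUnion]
        refine ⟨(j : ℕ), hjlen, le_trans ?_ hj0i, by rw [toList_get]; exact Finset.min'_mem _ _⟩
        rw [Fin.le_def] at hj; exact hj
      have h1 : (m : ℕ) ≤ μ (B π hπ (a j)) := by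
        have := hmin _ hminmem
        rw [Fin.le_def] at this
        rw [μ_eq_min']
        exact this
      have h2 : μ (B π hπ (a j0')) ≤ (m : ℕ) := μ_le hm0
      exact (μ_B_le_iff π hπ _ _).mp (le_trans h2 h1)
    have hodd := hlrm j0' hkey
    refine ⟨j0, hj0, ?_, by rw [toList_get]; exact hm0⟩
    have : ¬ Even (j0 + 1) := by
      rw [Nat.not_even_iff_odd]
      exact hodd
    rw [Nat.even_add_one, not_not] at this
    exact this

end CardOPAux

/-- The number of ordered partitions of fixed type `π` (with `k = π.card`
blocks) all of whose left-to-right minima occur at odd locations equals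
`permCount k`; in particular it depends only on `k`. -/
theorem card_op_fixed_type (n : ℕ) (π : Finset (Finset (Fin n)))
    (hπ : IsSetPartition n π) :
    Nat.card {L : List (Finset (Fin n)) //
        IsOP n L ∧ OddMinima n L ∧ L.toFinset = π} = permCount π.card := by
  classical
  open CardOPAux in
  rw [permCount]
  refine (Nat.card_congr (Equiv.ofBijective
    (fun (p : {a : Equiv.Perm (Fin π.card) // lrmOddPerm π.card a}) =>
      (⟨toList π hπ p.1, toList_isOP π hπ p.1,
        (key π hπ p.1).mpr p.2, toList_toFinset π hπ p.1⟩ :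
        {L : List (Finset (Fin n)) //
          IsOP n L ∧ OddMinima n L ∧ L.toFinset = π})) ?_)).symm
  constructor
  · rintro ⟨a, ha⟩ ⟨a', ha'⟩ h
    simp only [Subtype.mk.injEq] at h ⊢
    apply Equiv.ext
    intro i
    apply B_inj π hπ
    have hi : (i : ℕ) < (toList π hπ a).length := by rw [toList_length]; exact i.2
    have hi' : (i : ℕ) < (toList π hπ a').length := by rw [toList_length]; exact i.2
    have hg := (List.ext_get_iff.mp h).2 i hi hi'
    rw [toList_get, toList_get] at hg
    exact hg
  · rintro ⟨L, hOP, hOM, hTF⟩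
    -- L is nodup
    have hnd : L.Nodup := by
      apply List.Pairwise.imp_of_mem ?_ hOP.2.1
      intro A B hA hB hd
      intro hEq
      subst hEq
      exact ((hOP.1 A hA).ne_empty) (by simpa using disjoint_self.mp hd)
    have hlen : L.length = π.card := by
      rw [← hTF, List.toFinset_card_of_nodup hnd]
    have hmemπ : ∀ (j : ℕ) (hj : j < L.length), L.get ⟨j, hj⟩ ∈ π := by
      intro j hj
      rw [← hTF, List.mem_toFinset]
      exact List.get_mem L ⟨j, hj⟩
    let f : Fin π.card → Fin π.card := fun i =>
      ι π hπ (L.get ⟨(i : ℕ), by rw [hlen]; exact i.2⟩) (hmemπ _ _)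
    have hfinj : Function.Injective f := by
      intro i j h
      have : L.get ⟨(i : ℕ), by rw [hlen]; exact i.2⟩
          = L.get ⟨(j : ℕ), by rw [hlen]; exact j.2⟩ := by
        have h1 := congrArg (fun x => B π hπ x) h
        simp only [f, B_ι] at h1
        exact h1
      have h2 := List.nodup_iff_injective_get.mp hnd this
      simp only [Fin.mk.injEq] at h2
      exact Fin.ext h2
    let a : Equiv.Perm (Fin π.card) :=
      Equiv.ofBijective f (Finite.injective_iff_bijective.mp hfinj)
    have hL : toList π hπ a = L := by
      apply List.ext_get
      · rw [toList_length, hlen]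
      · intro j h1 h2
        rw [toList_get]
        show B π hπ (f _) = _
        show B π hπ (ι π hπ _ _) = _
        rw [B_ι]
    refine ⟨⟨a, ?_⟩, ?_⟩
    · rw [← key π hπ a, hL]; exact hOM
    · exact Subtype.ext hL
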